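/- Let α ∈ (0,1) and γ_min ∈ (0,1). Then ∫₀¹ sup{𝟙{u ≤ αγ}/γ : γ ∈ (γ_min, 1)} du = α·(1 − log γ_min), where the integral is Lebesgue integration over u ∈ [0,1]. Equivalently, if U is a random variable uniformly distributed on [0,1], then E[sup_{γ ∈ (γ_min,1)} 𝟙{U ≤ αγ}/γ] = α·(1 − log γ_min). -/

import Mathlib

open MeasureTheory

private lemma sup_eq_aux {α γmin : ℝ} (hα : α ∈ Set.Ioo (0 : ℝ) 1)
    (hγmin : γmin ∈ Set.Ioo (0 : ℝ) 1) (u : ℝ) :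
    sSup ((fun γ => (if u ≤ α * γ then (1 : ℝ) else 0) / γ) '' Set.Ioo γmin 1)
      = if u ≤ α * γmin then γmin⁻¹ else if u < α then α / u else 0 := by
  obtain ⟨hα0, hα1⟩ := hα
  obtain ⟨hg0, hg1⟩ := hγmin
  by_cases h1 : u ≤ α * γmin
  · rw [if_pos h1]
    have himg : (fun γ => (if u ≤ α * γ then (1 : ℝ) else 0) / γ) '' Set.Ioo γmin 1
        = Set.Ioo 1 γmin⁻¹ := by
      ext y
      constructor
      · rintro ⟨γ, ⟨hγa, hγb⟩, rfl⟩
        have hγpos : 0 < γ := hg0.trans hγa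
        have hind : u ≤ α * γ := h1.trans (by nlinarith)
        simp only [if_pos hind]
        refine ⟨?_, ?_⟩
        · rw [lt_div_iff₀ hγpos]; linarith
        · rw [div_lt_iff₀ hγpos, inv_mul_eq_div, lt_div_iff₀ hg0]; nlinarith
      · rintro ⟨hy1, hy2⟩
        have hy0 : 0 < y := lt_trans one_pos hy1
        refine ⟨y⁻¹, ⟨?_, ?_⟩, ?_⟩
        · rw [lt_inv_comm₀ hg0 hy0]; exact hy2
        · exact inv_lt_one_of_one_lt₀ hy1
        · have hγa : γmin < y⁻¹ := by rw [lt_inv_comm₀ hg0 hy0]; exact hy2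
          have hind : u ≤ α * y⁻¹ := h1.trans (by nlinarith)
          simp only [if_pos hind, one_div, inv_inv]
    rw [himg, csSup_Ioo (by exact (one_lt_inv₀ hg0).2 hg1)]
  · push_neg at h1
    have hu0 : 0 < u := lt_trans (by positivity) h1
    by_cases h2 : u < α
    · rw [if_neg (not_le.2 h1), if_pos h2]
      have hgreat : IsGreatest
          ((fun γ => (if u ≤ α * γ then (1 : ℝ) else 0) / γ) '' Set.Ioo γmin 1) (α / u) := by
        constructor
        · refine ⟨u / α, ⟨?_, ?_⟩, ?_⟩
          · rw [lt_div_iff₀ hα0]; nlinarith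
          · rw [div_lt_one hα0]; exact h2
          · have : u ≤ α * (u / α) := by rw [mul_div_cancel₀ _ (ne_of_gt hα0)]
            simp only [if_pos this, one_div, inv_div]
        · rintro y ⟨γ, ⟨hγa, hγb⟩, rfl⟩
          have hγpos : 0 < γ := hg0.trans hγa
          by_cases hind : u ≤ α * γ
          · simp only [if_pos hind]
            rw [div_le_div_iff₀ hγpos hu0]
            nlinarith
          · simp only [if_neg hind, zero_div]
            positivity
      exact hgreat.csSup_eq
    · push_neg at h2
      rw [if_neg (not_le.2 h1), if_neg (not_lt.2 h2)]
      have himg : (fun γ => (if u ≤ α * γ then (1 : ℝ) else 0) / γ) '' Set.Ioo γmin 1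
          = {0} := by
        ext y
        constructor
        · rintro ⟨γ, ⟨hγa, hγb⟩, rfl⟩
          have hγpos : 0 < γ := hg0.trans hγa
          have hind : ¬ u ≤ α * γ := by
            intro h
            nlinarith
          simp [if_neg hind]
        · rintro rfl
          refine ⟨(γmin + 1) / 2, ⟨by linarith, by linarith⟩, ?_⟩
          have hγpos : (0 : ℝ) < (γmin + 1) / 2 := by linarith
          have hind : ¬ u ≤ α * ((γmin + 1) / 2) := by
            intro h
            nlinarith
          simp [if_neg hind]
      rw [himg, csSup_singleton]

/-- **The uniform integral identity** (Mandozzi–Bühlmann, proof of Theorem 1,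
second assertion): `∫₀¹ sup_{γ ∈ (γ_min,1)} 𝟙{u ≤ αγ}/γ du = α (1 − log γ_min)`;
equivalently, for `U` uniformly distributed on `[0,1]`,
`E[sup_{γ ∈ (γ_min,1)} 𝟙{U ≤ αγ}/γ] = α (1 − log γ_min)`. -/
theorem integral_sSup_indicator_div
    {α γmin : ℝ} (hα : α ∈ Set.Ioo (0 : ℝ) 1) (hγmin : γmin ∈ Set.Ioo (0 : ℝ) 1)
    {Ω : Type*} [MeasurableSpace Ω] (ℙ : Measure Ω) [IsProbabilityMeasure ℙ]
    (U : Ω → ℝ) (hUmeas : Measurable U)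
    (hU : Measure.map U ℙ = volume.restrict (Set.Icc (0 : ℝ) 1)) :
    (∫ u in Set.Icc (0 : ℝ) 1,
        sSup ((fun γ => (if u ≤ α * γ then (1 : ℝ) else 0) / γ) '' Set.Ioo γmin 1)
      = α * (1 - Real.log γmin))
    ∧ (∫ ω, sSup ((fun γ => (if U ω ≤ α * γ then (1 : ℝ) else 0) / γ) '' Set.Ioo γmin 1) ∂ℙ
      = α * (1 - Real.log γmin)) := by
  obtain ⟨hα0, hα1⟩ := hα
  obtain ⟨hg0, hg1⟩ := hγmin
  set g : ℝ → ℝ := fun u => if u ≤ α * γmin then γmin⁻¹ else if u < α then α / u else 0 with hgdef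
  have hsup : ∀ u : ℝ,
      sSup ((fun γ => (if u ≤ α * γ then (1 : ℝ) else 0) / γ) '' Set.Ioo γmin 1) = g u :=
    fun u => sup_eq_aux ⟨hα0, hα1⟩ ⟨hg0, hg1⟩ u
  have hgmeas : Measurable g := by
    apply Measurable.ite (measurableSet_le measurable_id measurable_const) measurable_const
    exact Measurable.ite (measurableSet_lt measurable_id measurable_const)
      (measurable_const.div measurable_id) measurable_const
  -- boundedness
  have hbound : ∀ u : ℝ, ‖g u‖ ≤ γmin⁻¹ := by
    intro u
    rw [hgdef]
    simp only [Real.norm_eq_abs]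
    by_cases h1 : u ≤ α * γmin
    · rw [if_pos h1, abs_of_pos (by positivity)]
    · push_neg at h1
      have hu0 : 0 < u := lt_trans (by positivity) h1
      by_cases h2 : u < α
      · rw [if_neg (not_le.2 h1), if_pos h2, abs_of_pos (by positivity)]
        rw [div_le_iff₀ hu0, inv_mul_eq_div, le_div_iff₀ hg0]
        nlinarith
      · rw [if_neg (not_le.2 h1), if_neg (not_lt.2 (le_of_not_gt h2)), abs_zero]
        positivity
  have hintOn : ∀ a b : ℝ, IntervalIntegrable g volume a b := by
    intro a b
    rw [intervalIntegrable_iff]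
    refine Integrable.mono' ((integrableOn_const_iff (C := γmin⁻¹)).mpr (Or.inr ?_))
      hgmeas.aestronglyMeasurable.restrict (ae_of_all _ fun u => hbound u)
    rw [Set.uIoc]
    exact measure_Ioc_lt_top
  have hagm : 0 < α * γmin := by positivity
  have haga : α * γmin ≤ α := by nlinarith
  -- piece A
  have hA : ∫ u in (0:ℝ)..(α * γmin), g u = α := by
    rw [intervalIntegral.integral_congr (g := fun _ => γmin⁻¹) ?_]
    · rw [intervalIntegral.integral_const, smul_eq_mul, sub_zero, mul_assoc,
        mul_inv_cancel₀ (ne_of_gt hg0), mul_one]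
    · intro u hu
      rw [Set.uIcc_of_le (le_of_lt hagm)] at hu
      exact if_pos hu.2
  -- piece B
  have hB : ∫ u in (α * γmin)..α, g u = α * (- Real.log γmin) := by
    have heq : ∫ u in (α * γmin)..α, g u = ∫ u in (α * γmin)..α, α * u⁻¹ := by
      rw [intervalIntegral.integral_of_le haga, intervalIntegral.integral_of_le haga,
        MeasureTheory.integral_Ioc_eq_integral_Ioo,
        MeasureTheory.integral_Ioc_eq_integral_Ioo]
      apply setIntegral_congr_fun measurableSet_Ioo
      intro u hu
      have h1 : ¬ u ≤ α * γmin := not_le.2 hu.1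
      rw [hgdef]
      simp only
      rw [if_neg h1, if_pos hu.2, div_eq_mul_inv]
    rw [heq, intervalIntegral.integral_const_mul, integral_inv]
    · rw [show α / (α * γmin) = γmin⁻¹ from by field_simp, Real.log_inv]
    · rw [Set.uIcc_of_le haga]
      intro h
      exact absurd h.1 (not_le.2 hagm)
  -- piece C
  have hC : ∫ u in α..(1:ℝ), g u = 0 := by
    rw [intervalIntegral.integral_congr (g := fun _ => (0:ℝ)) ?_,
      intervalIntegral.integral_zero]
    intro u hu
    rw [Set.uIcc_of_le (le_of_lt hα1)] at hu
    have h1 : ¬ u ≤ α * γmin := not_le.2 (lt_of_lt_of_le (by nlinarith) hu.1)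
    have h2 : ¬ u < α := not_lt.2 hu.1
    rw [hgdef]
    simp only
    rw [if_neg h1, if_neg h2]
  have hsplit : ∫ u in (0:ℝ)..1, g u = α * (1 - Real.log γmin) := by
    rw [← intervalIntegral.integral_add_adjacent_intervals (b := α * γmin)
        (hintOn _ _) (hintOn _ _),
      ← intervalIntegral.integral_add_adjacent_intervals (a := α * γmin) (b := α)
        (hintOn _ _) (hintOn _ _), hA, hB, hC]
    ring
  have hfirst : ∫ u in Set.Icc (0 : ℝ) 1,
      sSup ((fun γ => (if u ≤ α * γ then (1 : ℝ) else 0) / γ) '' Set.Ioo γmin 1)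
      = α * (1 - Real.log γmin) := by
    simp only [hsup]
    rw [MeasureTheory.integral_Icc_eq_integral_Ioc,
      ← intervalIntegral.integral_of_le zero_le_one]
    exact hsplit
  refine ⟨hfirst, ?_⟩
  have : ∫ ω, sSup ((fun γ => (if U ω ≤ α * γ then (1 : ℝ) else 0) / γ) '' Set.Ioo γmin 1) ∂ℙ
      = ∫ ω, g (U ω) ∂ℙ := by
    congr 1
    funext ω
    exact hsup (U ω)
  rw [this, ← MeasureTheory.integral_map hUmeas.aemeasurable
    hgmeas.aestronglyMeasurable, hU]
  rw [← hfirst]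
  simp only [hsup]
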